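/- Let w ∈ [k]^n be a word and u = std(conv(w)) its standardized convexification. Then in every pipe dream for u (a finite set P ⊆ ℤ₊×ℤ₊ of cross positions with associated permutation u), all crosses lie in the leftmost k columns, i.e., (i,j) ∈ P implies j ≤ k. -/

import Mathlib

/-! Pipe dreams and their (Demazure product) permutations, together with the
convexification/standardization combinatorics of words, all 0-indexed. -/

/-- Position `p` is an initial position of the word `w`. -/
def InitialPos {n k : ℕ} (w : Fin n → Fin k) (p : Fin n) : Prop :=
  ∀ q : Fin n, q < p → w q ≠ w p

/-- A word is convex if all copies of each letter occupy consecutive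
positions. -/
def IsConvexWord {n k : ℕ} (w : Fin n → Fin k) : Prop :=
  ∀ p q r : Fin n, p ≤ q → q ≤ r → w p = w r → w q = w p

/-- Two words have the same multiset of letters. -/
def SameLetters {n k : ℕ} (w v : Fin n → Fin k) : Prop :=
  ∀ a : Fin k, Set.ncard {p : Fin n | w p = a} = Set.ncard {p : Fin n | v p = a}

/-- The first occurrence position of the letter `a` in the word `w`. -/
noncomputable def firstOcc {n k : ℕ} (w : Fin n → Fin k) (a : Fin k) : ℕ :=
  sInf {p : ℕ | ∃ h : p < n, w ⟨p, h⟩ = a}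

/-- Two words have the same ordering of initial letters. -/
def SameInitialOrder {n k : ℕ} (w v : Fin n → Fin k) : Prop :=
  ∀ a b : Fin k, (∃ p, w p = a) → (∃ p, w p = b) →
    (firstOcc w a ≤ firstOcc w b ↔ firstOcc v a ≤ firstOcc v b)

/-- `v` is the convexification of `w`. -/
def IsConvexification {n k : ℕ} (w v : Fin n → Fin k) : Prop :=
  IsConvexWord v ∧ SameLetters w v ∧ SameInitialOrder w v

/-- `u ∈ S_{n+k−m}` is the standardization of the word `v ∈ [k]ⁿ` (using `m`
letters), 0-indexed. -/
def IsStandardization {n k m : ℕ} (v : Fin n → Fin k)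
    (u : Equiv.Perm (Fin (n + (k - m)))) : Prop :=
  ∀ p : Fin (n + (k - m)),
    (∀ h : (p : ℕ) < n,
      (InitialPos v ⟨p, h⟩ → (u p : ℕ) = (v ⟨p, h⟩ : ℕ)) ∧
      (¬ InitialPos v ⟨p, h⟩ →
        (u p : ℕ) = k + Set.ncard {q : Fin n | (q : ℕ) < (p : ℕ) ∧ ¬ InitialPos v q})) ∧
    (n ≤ (p : ℕ) →
      (u p : ℕ) < k ∧ (∀ q : Fin n, (v q : ℕ) ≠ (u p : ℕ)) ∧
      Set.ncard {c : Fin k | (c : ℕ) < (u p : ℕ) ∧ ∀ q : Fin n, v q ≠ c} = (p : ℕ) - n)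

/-- The number of inversions of a permutation of `ℕ` (finite for permutations
moving only finitely many points). -/
noncomputable def invCountNat (u : Equiv.Perm ℕ) : ℕ :=
  Set.ncard {x : ℕ × ℕ | x.1 < x.2 ∧ u x.2 < u x.1}

/-- The simple transposition `s_a` of `ℕ`, swapping `a` and `a + 1`
(0-indexed). -/
def sNat (a : ℕ) : Equiv.Perm ℕ := Equiv.swap a (a + 1)

/-- The Demazure product of a word in the simple transpositions: each letter is
multiplied on the right when it increases the length and dropped otherwise.
(Redundant crossings of a non-reduced pipe dream are thereby ignored.) -/
noncomputable def demazureProd (l : List ℕ) : Equiv.Perm ℕ :=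
  l.foldl (fun acc a =>
    if invCountNat (acc * sNat a) ≤ invCountNat acc then acc else acc * sNat a) 1

/-- The word of a pipe dream `P` (a finite set of crosses, in 0-indexed matrix
coordinates): the cross at `(i, j)` is the letter `s_{i+j}`, and the crosses
are read along rows from right to left, rows top to bottom. -/
def pdWord (P : Finset (ℕ × ℕ)) : List ℕ :=
  let N := (P.sup fun x => max x.1 x.2) + 1
  (List.range N).flatMap fun i =>
    (List.range N).reverse.filterMap fun j =>
      if (i, j) ∈ P then some (i + j) else none

noncomputable def dstep (acc : Equiv.Perm ℕ) (a : ℕ) : Equiv.Perm ℕ :=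
  if invCountNat (acc * sNat a) ≤ invCountNat acc then acc else acc * sNat a

lemma demazureProd_eq_foldl (l : List ℕ) : demazureProd l = l.foldl dstep 1 := rfl

def InvSet (σ : Equiv.Perm ℕ) : Set (ℕ × ℕ) := {x | x.1 < x.2 ∧ σ x.2 < σ x.1}

lemma invCountNat_eq (σ : Equiv.Perm ℕ) : invCountNat σ = (InvSet σ).ncard := rfl

def Fixes (σ : Equiv.Perm ℕ) (M : ℕ) : Prop := ∀ x, M ≤ x → σ x = x

def Good (a : ℕ) (σ : Equiv.Perm ℕ) : Prop := ∃ x y, x < y ∧ σ x = a + 1 ∧ σ y = a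

lemma sNat_apply (b x : ℕ) : sNat b x = if x = b then b + 1 else if x = b + 1 then b else x := by
  simp only [sNat, Equiv.swap_apply_def]

lemma sNat_sNat (b x : ℕ) : sNat b (sNat b x) = x := Equiv.swap_apply_self _ _ _

lemma sNat_lt {b x y : ℕ} (hxy : x < y) (hne : ¬(x = b ∧ y = b + 1)) :
    sNat b x < sNat b y := by
  rw [sNat_apply, sNat_apply]
  split_ifs <;> omega

lemma Fixes.lt {σ : Equiv.Perm ℕ} {M : ℕ} (h : Fixes σ M) {x : ℕ} (hx : x < M) : σ x < M := by
  by_contra hc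
  push_neg at hc
  have h2 := σ.injective (h _ hc)
  omega

lemma invSet_subset {σ : Equiv.Perm ℕ} {M : ℕ} (h : Fixes σ M) :
    InvSet σ ⊆ Set.Iio M ×ˢ Set.Iio M := by
  rintro ⟨p, q⟩ ⟨hpq, hinv⟩
  simp only [Set.mem_prod, Set.mem_Iio]
  simp only at hpq hinv
  by_cases hq : q < M
  · exact ⟨lt_trans hpq hq, hq⟩
  · push_neg at hq
    rw [h q hq] at hinv
    by_cases hp : p < M
    · have := h.lt hp; omega
    · push_neg at hp; rw [h p hp] at hinv; omega

lemma invSet_finite {σ : Equiv.Perm ℕ} {M : ℕ} (h : Fixes σ M) : (InvSet σ).Finite :=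
  Set.Finite.subset ((Set.finite_Iio M).prod (Set.finite_Iio M)) (invSet_subset h)

lemma fixes_one (a : ℕ) : Fixes 1 a := fun _ _ => rfl

lemma fixes_mul {σ : Equiv.Perm ℕ} {M b : ℕ} (h : Fixes σ M) (hb : b + 2 ≤ M) :
    Fixes (σ * sNat b) M := by
  intro x hx
  have hs : sNat b x = x := by rw [sNat_apply]; split_ifs <;> omega
  show σ (sNat b x) = x
  rw [hs, h x hx]

lemma keyA {σ : Equiv.Perm ℕ} {a : ℕ} (h : Fixes σ a) :
    invCountNat σ < invCountNat (σ * sNat a) := by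
  have hfix2 : Fixes (σ * sNat a) (a + 2) := fixes_mul (fun x hx => h x (by omega)) le_rfl
  have hsa : sNat a a = a + 1 := by rw [sNat_apply]; split_ifs <;> omega
  have hsa1 : sNat a (a + 1) = a := by rw [sNat_apply]; split_ifs <;> omega
  have he1 : (σ * sNat a) a = a + 1 := by
    show σ (sNat a a) = a + 1
    rw [hsa]; exact h _ (by omega)
  have he2 : (σ * sNat a) (a + 1) = a := by
    show σ (sNat a (a + 1)) = a
    rw [hsa1]; exact h _ le_rfl
  have hmem : (a, a + 1) ∈ InvSet (σ * sNat a) := by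
    refine ⟨by omega, ?_⟩
    show (σ * sNat a) (a + 1) < (σ * sNat a) a
    rw [he1, he2]; omega
  have hnotmem : (a, a + 1) ∉ InvSet σ := by
    rintro ⟨-, hinv⟩
    simp only at hinv
    rw [h a le_rfl, h (a + 1) (by omega)] at hinv
    omega
  have hsub : InvSet σ ⊆ InvSet (σ * sNat a) := by
    rintro ⟨p, q⟩ hpq
    have hio := invSet_subset h hpq
    simp only [Set.mem_prod, Set.mem_Iio] at hio
    obtain ⟨hpq1, hpq2⟩ := hpq
    simp only at hpq1 hpq2
    have hsp : sNat a p = p := by rw [sNat_apply]; split_ifs <;> omega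
    have hsq : sNat a q = q := by rw [sNat_apply]; split_ifs <;> omega
    refine ⟨hpq1, ?_⟩
    show σ (sNat a q) < σ (sNat a p)
    rw [hsp, hsq]; exact hpq2
  rw [invCountNat_eq, invCountNat_eq]
  exact Set.ncard_lt_ncard ((Set.ssubset_iff_of_subset hsub).mpr ⟨_, hmem, hnotmem⟩)
    (invSet_finite hfix2)

lemma keyB {σ : Equiv.Perm ℕ} {M b : ℕ} (h : Fixes σ M) (hd : σ (b + 1) < σ b) :
    invCountNat (σ * sNat b) ≤ invCountNat σ := by
  rw [invCountNat_eq, invCountNat_eq]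
  apply Set.ncard_le_ncard_of_injOn (fun p => (sNat b p.1, sNat b p.2)) ?_ ?_ (invSet_finite h)
  · rintro ⟨p, q⟩ ⟨hpq, hinv⟩
    simp only at hpq hinv
    have hinv' : σ (sNat b q) < σ (sNat b p) := hinv
    have hne : ¬(p = b ∧ q = b + 1) := by
      rintro ⟨rfl, rfl⟩
      rw [sNat_apply, sNat_apply] at hinv'
      rw [if_neg (by omega), if_pos rfl, if_pos rfl] at hinv'
      omega
    exact ⟨sNat_lt hpq hne, hinv'⟩
  · rintro ⟨p, q⟩ - ⟨p', q'⟩ - he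
    simp only [Prod.mk.injEq] at he
    obtain ⟨h1, h2⟩ := he
    have := (sNat b).injective h1
    have := (sNat b).injective h2
    simp_all

lemma dstep_preserve {σ : Equiv.Perm ℕ} {M b a : ℕ} (hb : b + 2 ≤ M)
    (hσ : Fixes σ M ∧ Good a σ) : Fixes (dstep σ b) M ∧ Good a (dstep σ b) := by
  unfold dstep
  split_ifs with h
  · exact hσ
  · obtain ⟨hfix, x, y, hxy, hx, hy⟩ := hσ
    refine ⟨fixes_mul hfix hb, ?_⟩
    by_cases hc : x = b ∧ y = b + 1
    · exfalso
      obtain ⟨rfl, rfl⟩ := hc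
      exact h (keyB hfix (by rw [hx, hy]; omega))
    · refine ⟨sNat b x, sNat b y, sNat_lt hxy hc, ?_, ?_⟩
      · show σ (sNat b (sNat b x)) = a + 1
        rw [sNat_sNat, hx]
      · show σ (sNat b (sNat b y)) = a
        rw [sNat_sNat, hy]

lemma foldl_preserve {M a : ℕ} : ∀ (L : List ℕ) (σ : Equiv.Perm ℕ),
    (∀ b ∈ L, b + 2 ≤ M) → Fixes σ M ∧ Good a σ →
    Fixes (L.foldl dstep σ) M ∧ Good a (L.foldl dstep σ)
  | [], _, _, h => h
  | b :: L, σ, hL, h =>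
    foldl_preserve L _ (fun c hc => hL c (List.mem_cons_of_mem _ hc))
      (dstep_preserve (hL b List.mem_cons_self) h)

lemma dstep_fixes {σ : Equiv.Perm ℕ} {a b : ℕ} (hb : b + 2 ≤ a) (h : Fixes σ a) :
    Fixes (dstep σ b) a := by
  unfold dstep
  split_ifs with hc
  · exact h
  · exact fixes_mul h hb

lemma foldl_fixes {a : ℕ} : ∀ (L : List ℕ) (σ : Equiv.Perm ℕ),
    (∀ b ∈ L, b + 2 ≤ a) → Fixes σ a → Fixes (L.foldl dstep σ) a
  | [], _, _, h => h
  | b :: L, σ, hL, h =>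
    foldl_fixes L _ (fun c hc => hL c (List.mem_cons_of_mem _ hc))
      (dstep_fixes (hL b List.mem_cons_self) h)

lemma sNat_self (b : ℕ) : sNat b b = b + 1 := by rw [sNat_apply]; split_ifs <;> omega
lemma sNat_succ_self (b : ℕ) : sNat b (b + 1) = b := by rw [sNat_apply]; split_ifs <;> omega

lemma range_split {N t : ℕ} (ht : t < N) :
    List.range N = List.range' 0 t ++ (t :: List.range' (t + 1) (N - (t + 1))) := by
  have e : ((N - (t + 1)) + 1) + t = N := by omega
  calc List.range N = List.range' 0 N := List.range_eq_range'
    _ = List.range' 0 (((N - (t + 1)) + 1) + t) := by rw [e]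
    _ = List.range' 0 t ++ List.range' (0 + t) ((N - (t + 1)) + 1) :=
        by rw [List.range'_append_1, show N - (t + 1) + 1 + t = t + (N - (t + 1) + 1) by omega]
    _ = List.range' 0 t ++ (t :: List.range' (t + 1) (N - (t + 1))) := by
        rw [List.range'_succ]; norm_num

lemma good_of_cross (P : Finset (ℕ × ℕ)) (r c k : ℕ) (hrcP : (r, c) ∈ P) (hkc : k ≤ c)
    (hrow : ∀ i j, (i, j) ∈ P → i < r → j < k)
    (hcolmax : ∀ j, (r, j) ∈ P → j ≤ c) :
    Good (r + c) (demazureProd (pdWord P)) := by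
  classical
  set N : ℕ := (P.sup fun y => max y.1 y.2) + 1 with hNdef
  have hPN : ∀ y ∈ P, y.1 < N ∧ y.2 < N := by
    intro y hy
    have h := Finset.le_sup (f := fun y : ℕ × ℕ => max y.1 y.2) hy
    have h1 := le_trans (le_max_left y.1 y.2) h
    have h2 := le_trans (le_max_right y.1 y.2) h
    omega
  have hrN : r < N := (hPN _ hrcP).1
  have hcN : c < N := (hPN _ hrcP).2
  set f : ℕ → ℕ → Option ℕ := fun i j => if (i, j) ∈ P then some (i + j) else none with hfdef
  set g : ℕ → List ℕ := fun i => (List.range N).reverse.filterMap (f i) with hgdef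
  have hword : pdWord P = (List.range N).flatMap g := rfl
  -- membership bound for all letters
  have hmemword : ∀ b ∈ pdWord P, ∃ yy ∈ P, b = yy.1 + yy.2 := by
    intro b hb
    rw [hword, List.mem_flatMap] at hb
    obtain ⟨i, -, hb⟩ := hb
    rw [hgdef, List.mem_filterMap] at hb
    obtain ⟨j, -, hb⟩ := hb
    by_cases hij : (i, j) ∈ P
    · rw [hfdef] at hb; simp only [if_pos hij, Option.some_inj] at hb
      exact ⟨(i, j), hij, hb.symm⟩
    · rw [hfdef] at hb; simp only [if_neg hij] at hb; cases hb
  -- decompose the word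
  have hgr : g r = (r + c) :: ((List.range' 0 c).filterMap (f r)).reverse := by
    rw [hgdef]
    show (List.range N).reverse.filterMap (f r) = _
    rw [List.filterMap_reverse, range_split hcN, List.filterMap_append, List.filterMap_cons]
    have hfc : f r c = some (r + c) := by rw [hfdef]; exact if_pos hrcP
    have hnil : (List.range' (c + 1) (N - (c + 1))).filterMap (f r) = [] := by
      rw [List.filterMap_eq_nil_iff]
      intro j hj
      have hjc : c + 1 ≤ j := (List.mem_range'_1.1 hj).1
      have hnm : (r, j) ∉ P := fun hm => absurd (hcolmax j hm) (by omega)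
      rw [hfdef]; exact if_neg hnm
    rw [hfc, hnil]
    simp
  have hword3 : pdWord P = ((List.range' 0 r).flatMap g) ++ (r + c) ::
      (((List.range' 0 c).filterMap (f r)).reverse ++
        (List.range' (r + 1) (N - (r + 1))).flatMap g) := by
    rw [hword, range_split hrN, List.flatMap_append, List.flatMap_cons, hgr]
    simp
  -- the prefix fixes [r+c, ∞)
  have hσ1fix : Fixes (((List.range' 0 r).flatMap g).foldl dstep 1) (r + c) := by
    apply foldl_fixes _ _ ?_ (fixes_one _)
    intro b hb
    rw [List.mem_flatMap] at hb
    obtain ⟨i, hi, hb⟩ := hb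
    have hir : i < r := by
      have := (List.mem_range'_1.1 hi).2; omega
    rw [hgdef, List.mem_filterMap] at hb
    obtain ⟨j, -, hb⟩ := hb
    by_cases hij : (i, j) ∈ P
    · rw [hfdef] at hb; simp only [if_pos hij, Option.some_inj] at hb
      have hjk := hrow i j hij hir
      omega
    · rw [hfdef] at hb; simp only [if_neg hij] at hb; cases hb
  set σ1 : Equiv.Perm ℕ := ((List.range' 0 r).flatMap g).foldl dstep 1 with hσ1def
  have hkey : dstep σ1 (r + c) = σ1 * sNat (r + c) := by
    unfold dstep
    rw [if_neg (by have := keyA hσ1fix; omega)]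
  have hσ2good : Good (r + c) (σ1 * sNat (r + c)) := by
    refine ⟨r + c, r + c + 1, by omega, ?_, ?_⟩
    · show σ1 (sNat (r + c) (r + c)) = r + c + 1
      rw [sNat_self]; exact hσ1fix _ (by omega)
    · show σ1 (sNat (r + c) (r + c + 1)) = r + c
      rw [sNat_succ_self]; exact hσ1fix _ le_rfl
  have hσ2fix : Fixes (σ1 * sNat (r + c)) (2 * N) :=
    fixes_mul (fun x hx => hσ1fix x (by omega)) (by omega)
  have hrest : ∀ b ∈ (((List.range' 0 c).filterMap (f r)).reverse ++
      (List.range' (r + 1) (N - (r + 1))).flatMap g), b + 2 ≤ 2 * N := by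
    intro b hb
    have hbw : b ∈ pdWord P := by
      rw [hword3, List.mem_append, List.mem_cons]
      exact Or.inr (Or.inr hb)
    obtain ⟨yy, hyy, rfl⟩ := hmemword b hbw
    have := hPN yy hyy
    omega
  have final := foldl_preserve _ (σ1 * sNat (r + c)) hrest ⟨hσ2fix, hσ2good⟩
  rw [demazureProd_eq_foldl, hword3, List.foldl_append, List.foldl_cons, hkey]
  exact final.2

set_option maxHeartbeats 1000000 in
/-- Let `w ∈ [k]ⁿ` be a word and `u = std(conv(w))` its standardized
convexification.  Then in every pipe dream for `u` — a finite set `P` of cross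
positions whose associated permutation (the Demazure product of its word) is
`u` (extended by the identity to a permutation of `ℕ`) — all crosses lie in
the leftmost `k` columns: `(i, j) ∈ P` implies `j < k` (0-indexed). -/
theorem pipeDream_crosses_in_first_k_columns (n k : ℕ) (h1 : 1 ≤ k) (h2 : k ≤ n)
    (w : Fin n → Fin k) (v : Fin n → Fin k) (hv : IsConvexification w v)
    (u : Equiv.Perm (Fin (n + (k - Set.ncard (Set.range w)))))
    (hu : IsStandardization v u)
    (uext : Equiv.Perm ℕ)
    (huext : ∀ a : ℕ,
      uext a = if h : a < n + (k - Set.ncard (Set.range w)) then (u ⟨a, h⟩ : ℕ) else a)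
    (P : Finset (ℕ × ℕ)) (hP : demazureProd (pdWord P) = uext) :
    ∀ x ∈ P, x.2 < k := by
  classical
  intro x hxP
  by_contra hcol
  push_neg at hcol
  -- choose the first cross (in reading order) among those in columns ≥ k
  set S : Finset (ℕ × ℕ) := P.filter (fun y => k ≤ y.2) with hSdef
  have hxS : x ∈ S := Finset.mem_filter.2 ⟨hxP, hcol⟩
  have hSne : (S.image Prod.fst).Nonempty := ⟨x.1, Finset.mem_image_of_mem _ hxS⟩
  set r : ℕ := (S.image Prod.fst).min' hSne with hrdef
  have hrmem := (S.image Prod.fst).min'_mem hSne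
  obtain ⟨y0, hy0S, hy01⟩ := Finset.mem_image.1 hrmem
  have hTne : ((S.filter (fun y => y.1 = r)).image Prod.snd).Nonempty :=
    ⟨y0.2, Finset.mem_image_of_mem _ (Finset.mem_filter.2 ⟨hy0S, hy01⟩)⟩
  set c : ℕ := ((S.filter (fun y => y.1 = r)).image Prod.snd).max' hTne with hcdef
  have hcmem := ((S.filter (fun y => y.1 = r)).image Prod.snd).max'_mem hTne
  obtain ⟨y1, hy1, hy12⟩ := Finset.mem_image.1 hcmem
  have hy1S : y1 ∈ S := (Finset.mem_filter.1 hy1).1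
  have hy11 : y1.1 = r := (Finset.mem_filter.1 hy1).2
  have hy1eq : y1 = (r, c) := Prod.ext hy11 hy12
  have hrcP : (r, c) ∈ P := by
    have := (Finset.mem_filter.1 hy1S).1
    rwa [hy1eq] at this
  have hkc : k ≤ c := by
    have := (Finset.mem_filter.1 hy1S).2
    omega
  have hrow : ∀ i j, (i, j) ∈ P → i < r → j < k := by
    intro i j hij hir
    by_contra hj
    push_neg at hj
    have hmem : i ∈ S.image Prod.fst :=
      Finset.mem_image_of_mem _ (Finset.mem_filter.2 ⟨hij, hj⟩)
    have := Finset.min'_le _ _ hmem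
    omega
  have hcolmax : ∀ j, (r, j) ∈ P → j ≤ c := by
    intro j hj
    by_contra hjc
    push_neg at hjc
    have hkj : k ≤ j := by omega
    have hmem1 : (r, j) ∈ S := Finset.mem_filter.2 ⟨hj, hkj⟩
    have hmem2 : (r, j) ∈ S.filter (fun y => y.1 = r) := Finset.mem_filter.2 ⟨hmem1, rfl⟩
    have hmem : j ∈ (S.filter (fun y => y.1 = r)).image Prod.snd :=
      Finset.mem_image_of_mem Prod.snd hmem2
    have := Finset.le_max' _ _ hmem
    omega
  -- the Demazure product has the inverted value pair (r+c, r+c+1)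
  have hgood : Good (r + c) uext := by
    rw [← hP]
    exact good_of_cross P r c k hrcP hkc hrow hcolmax
  obtain ⟨x0, y0', hx0y0, hvx0, hvy0⟩ := hgood
  -- but uext is increasing on values ≥ k : contradiction
  rcases lt_or_ge y0' (n + (k - Set.ncard (Set.range w))) with hy | hy
  · rw [huext y0', dif_pos hy] at hvy0
    rcases lt_or_ge y0' n with hyn | hyn
    · have hxn : x0 < n := lt_trans hx0y0 hyn
      have hxN : x0 < n + (k - Set.ncard (Set.range w)) := by omega
      rw [huext x0, dif_pos hxN] at hvx0
      have hy2 := (hu ⟨y0', hy⟩).1 hyn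
      have hx2 := (hu ⟨x0, hxN⟩).1 hxn
      have hyni : ¬ InitialPos v ⟨y0', hyn⟩ := by
        intro hI
        have h3 := hy2.1 hI
        have h4 : ((v ⟨y0', hyn⟩ : Fin k) : ℕ) < k := Fin.is_lt _
        omega
      have hxni : ¬ InitialPos v ⟨x0, hxn⟩ := by
        intro hI
        have h3 := hx2.1 hI
        have h4 : ((v ⟨x0, hxn⟩ : Fin k) : ℕ) < k := Fin.is_lt _
        omega
      have hyc := hy2.2 hyni
      have hxc := hx2.2 hxni
      simp only [Fin.val_mk] at hyc hxc
      have hsub : {q : Fin n | (q : ℕ) < x0 ∧ ¬ InitialPos v q} ⊆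
          {q : Fin n | (q : ℕ) < y0' ∧ ¬ InitialPos v q} := by
        rintro q ⟨hq1, hq2⟩
        exact ⟨by omega, hq2⟩
      have hle := Set.ncard_le_ncard hsub (Set.toFinite _)
      omega
    · have h3 := ((hu ⟨y0', hy⟩).2 hyn).1
      omega
  · rw [huext y0', dif_neg (not_lt.2 hy)] at hvy0
    rcases lt_or_ge x0 (n + (k - Set.ncard (Set.range w))) with hx' | hx'
    · rw [huext x0, dif_pos hx'] at hvx0
      have h3 := (u ⟨x0, hx'⟩).isLt
      omega
    · rw [huext x0, dif_neg (not_lt.2 hx')] at hvx0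
      omega
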